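/- Let P1 := (x1^3 − x2^3)·(x2^3 − x3^3)·(x3^3 − x1^3) and P2 := x1^3·x2^3·x3^3 in ℂ[x1, x2, x3]. Then for all t0, t1 ∈ ℂ with t1 ≠ 0, the polynomial t1·x1^21 − (t0 − t1)·(x2^3 − x3^3)·P2·(P1 − P2) + t1·(x2^21 − x3^21) is irreducible in ℂ[x1, x2, x3]. -/

import Mathlib

open MvPolynomial

/-- `P1 = (x1³−x2³)(x2³−x3³)(x3³−x1³)` in `ℂ[x1, x2, x3]`
(variables `x1 = X 0`, `x2 = X 1`, `x3 = X 2`). -/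
noncomputable def P1 : MvPolynomial (Fin 3) ℂ :=
  (X 0 ^ 3 - X 1 ^ 3) * (X 1 ^ 3 - X 2 ^ 3) * (X 2 ^ 3 - X 0 ^ 3)

/-- `P2 = x1³x2³x3³` in `ℂ[x1, x2, x3]`. -/
noncomputable def P2 : MvPolynomial (Fin 3) ℂ :=
  X 0 ^ 3 * X 1 ^ 3 * X 2 ^ 3

namespace Stmt16Aux

/-- The base ring `ℂ[x2,x3]`. -/
abbrev Q2 : Type := MvPolynomial (Fin 2) ℂ

noncomputable def Y : Q2 := X 0
noncomputable def Z : Q2 := X 1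

/-- The image of the pencil polynomial under `finSuccEquiv`, written explicitly as a
polynomial in `x1` with coefficients in `ℂ[x2,x3]`. -/
noncomputable def g (t0 t1 : ℂ) : Polynomial Q2 :=
  Polynomial.C (C t1) * Polynomial.X ^ 21
  + Polynomial.C (C (t0 - t1) * (Y ^ 3 - Z ^ 3) ^ 2 * (Y ^ 3 * Z ^ 3)) * Polynomial.X ^ 9
  - Polynomial.C (C (t0 - t1) * (Y ^ 3 - Z ^ 3) * (Y ^ 3 * Z ^ 3) *
      ((Y ^ 3 - Z ^ 3) * (Y ^ 3 + Z ^ 3) - Y ^ 3 * Z ^ 3)) * Polynomial.X ^ 6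
  + Polynomial.C (C (t0 - t1) * (Y ^ 3 - Z ^ 3) ^ 2 * (Y ^ 6 * Z ^ 6)) * Polynomial.X ^ 3
  + Polynomial.C (C t1 * (Y ^ 21 - Z ^ 21))

lemma coeff_g (t0 t1 : ℂ) (n : ℕ) :
    (g t0 t1).coeff n =
      if n = 21 then C t1
      else if n = 9 then C (t0 - t1) * (Y ^ 3 - Z ^ 3) ^ 2 * (Y ^ 3 * Z ^ 3)
      else if n = 6 then -(C (t0 - t1) * (Y ^ 3 - Z ^ 3) * (Y ^ 3 * Z ^ 3) *
          ((Y ^ 3 - Z ^ 3) * (Y ^ 3 + Z ^ 3) - Y ^ 3 * Z ^ 3))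
      else if n = 3 then C (t0 - t1) * (Y ^ 3 - Z ^ 3) ^ 2 * (Y ^ 6 * Z ^ 6)
      else if n = 0 then C t1 * (Y ^ 21 - Z ^ 21)
      else 0 := by
  simp only [g, Polynomial.coeff_add, Polynomial.coeff_sub, Polynomial.coeff_C_mul,
    Polynomial.coeff_X_pow, Polynomial.coeff_C]
  split_ifs <;> simp_all

lemma natDegree_g (t0 t1 : ℂ) (ht1 : t1 ≠ 0) : (g t0 t1).natDegree = 21 := by
  unfold g
  compute_degree!

end Stmt16Aux

open Stmt16Aux in
/-- For all `t0, t1 ∈ ℂ` with `t1 ≠ 0`, the degree-21 polynomial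
`t1·x1²¹ − (t0−t1)·(x2³−x3³)·P2·(P1−P2) + t1·(x2²¹ − x3²¹)` is irreducible in
`ℂ[x1, x2, x3]`. -/
theorem stmt_16 (t0 t1 : ℂ) (ht1 : t1 ≠ 0) :
    Irreducible (C t1 * X 0 ^ 21 -
      C (t0 - t1) * ((X 1 ^ 3 - X 2 ^ 3) * P2 * (P1 - P2)) +
      C t1 * (X 1 ^ 21 - X 2 ^ 21)) := by
  classical
  -- the unit `C t1`
  have hCt1 : IsUnit (C t1 : Q2) := (Ne.isUnit ht1).map (C : ℂ →+* Q2)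
  -- `Y - Z` is prime in `ℂ[x2,x3]`
  have hYZ : Prime (Y - Z) := by
    have key : (MvPolynomial.finSuccEquiv ℂ 1) (Y - Z)
        = Polynomial.X - Polynomial.C (X 0) := by
      have hz : (Z : Q2) = X (Fin.succ 0) := rfl
      rw [Y, hz, map_sub, MvPolynomial.finSuccEquiv_X_zero, MvPolynomial.finSuccEquiv_X_succ]
    rw [← MulEquiv.prime_iff ((MvPolynomial.finSuccEquiv ℂ 1).toRingEquiv.toMulEquiv)]
    show Prime ((MvPolynomial.finSuccEquiv ℂ 1) (Y - Z))
    rw [key]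
    exact Polynomial.prime_X_sub_C _
  have hYZ0 : (Y - Z : Q2) ≠ 0 := hYZ.ne_zero
  set 𝓟 : Ideal Q2 := Ideal.span {Y - Z} with h𝓟
  have hPrime : 𝓟.IsPrime := (Ideal.span_singleton_prime hYZ0).mpr hYZ
  have hA : (Y - Z) ∣ (Y ^ 3 - Z ^ 3) := sub_dvd_pow_sub_pow Y Z 3
  have hdeg := natDegree_g t0 t1 ht1
  -- Eisenstein at `(Y - Z)`
  have hEis : (g t0 t1).IsEisensteinAt 𝓟 := by
    constructor
    · rw [Polynomial.leadingCoeff, hdeg, coeff_g, if_pos rfl, h𝓟, Ideal.mem_span_singleton]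
      intro h
      exact hYZ.not_unit (isUnit_of_dvd_unit h hCt1)
    · intro n hn
      rw [hdeg] at hn
      rw [coeff_g, h𝓟, Ideal.mem_span_singleton]
      interval_cases n <;> norm_num
      · exact (sub_dvd_pow_sub_pow Y Z 21).mul_left _
      · exact ((dvd_pow hA two_ne_zero).mul_left _).mul_right _
      · exact ((hA.mul_left _).mul_right _).mul_right _
      · exact ((dvd_pow hA two_ne_zero).mul_left _).mul_right _
    · rw [coeff_g, if_neg (by norm_num), if_neg (by norm_num), if_neg (by norm_num),
        if_neg (by norm_num), if_pos rfl, h𝓟, Ideal.span_singleton_pow,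
        Ideal.mem_span_singleton]
      rintro ⟨r, hr⟩
      -- cancel the unit `C t1`
      have hr2 : Y ^ 21 - Z ^ 21 = (Y - Z) ^ 2 * (C t1⁻¹ * r) := by
        have hC : (C t1⁻¹ : Q2) * C t1 = 1 := by
          rw [← C_mul, inv_mul_cancel₀ ht1, C_1]
        calc Y ^ 21 - Z ^ 21 = C t1⁻¹ * C t1 * (Y ^ 21 - Z ^ 21) := by rw [hC, one_mul]
          _ = C t1⁻¹ * ((Y - Z) ^ 2 * r) := by rw [mul_assoc, ← hr]
          _ = (Y - Z) ^ 2 * (C t1⁻¹ * r) := by ring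
      -- geometric sum factorization and cancellation
      have hgeo : (∑ i ∈ Finset.range 21, Y ^ i * Z ^ (20 - i)) * (Y - Z)
          = Y ^ 21 - Z ^ 21 := geom_sum₂_mul Y Z 21
      have hcancel : (∑ i ∈ Finset.range 21, Y ^ i * Z ^ (20 - i))
          = (Y - Z) * (C t1⁻¹ * r) := by
        apply mul_right_cancel₀ hYZ0
        rw [hgeo, hr2]; ring
      -- evaluate everything at `x2 = x3 = 1`
      have := congrArg (MvPolynomial.aeval (fun _ : Fin 2 => (1 : ℂ))) hcancel
      simp [Y, Z, map_sum] at this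
  -- primitivity
  have hPrim : (g t0 t1).IsPrimitive := by
    intro r hr
    have := (Polynomial.C_dvd_iff_dvd_coeff r (g t0 t1)).mp hr 21
    rw [coeff_g, if_pos rfl] at this
    exact isUnit_of_dvd_unit this hCt1
  have hirr : Irreducible (g t0 t1) :=
    hEis.irreducible hPrime hPrim (by rw [hdeg]; norm_num)
  -- transfer along `finSuccEquiv`
  set φ := MvPolynomial.finSuccEquiv ℂ 2 with hφdef
  have h1 : φ (X 1) = Polynomial.C (X 0) := by
    have : (X 1 : MvPolynomial (Fin 3) ℂ) = X (Fin.succ 0) := rfl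
    rw [this, hφdef, MvPolynomial.finSuccEquiv_X_succ]
  have h2 : φ (X 2) = Polynomial.C (X 1) := by
    have : (X 2 : MvPolynomial (Fin 3) ℂ) = X (Fin.succ 1) := rfl
    rw [this, hφdef, MvPolynomial.finSuccEquiv_X_succ]
  have h0 : φ (X 0) = Polynomial.X := MvPolynomial.finSuccEquiv_X_zero
  have hC : ∀ a : ℂ, φ (C a) = Polynomial.C (C a) := by
    intro a
    have := φ.commutes a
    simpa [MvPolynomial.algebraMap_eq, Polynomial.algebraMap_apply] using this
  have hmap : φ (C t1 * X 0 ^ 21 -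
      C (t0 - t1) * ((X 1 ^ 3 - X 2 ^ 3) * P2 * (P1 - P2)) +
      C t1 * (X 1 ^ 21 - X 2 ^ 21)) = g t0 t1 := by
    simp only [P1, P2, map_add, map_sub, map_mul, map_pow, h0, h1, h2, hC]
    simp only [g, Y, Z, map_mul, map_sub, map_add, map_pow, Polynomial.C_mul, Polynomial.C_sub,
      Polynomial.C_add, Polynomial.C_pow]
    ring
  exact Irreducible.of_map (f := φ) (by rw [hmap]; exact hirr)
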